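/- Let A be an n×n Hermitian matrix and c ∈ ℝ. The quadratic inequality x^H A x + 2 Re(x^H b) + c ≥ 0 holds for all x with ‖x‖ ≤ ε (ε > 0) if there exists δ ≥ 0 such that the block matrix [[A + δI, b],[b^H, c - δε^2]] is positive semidefinite. -/

import Mathlib

open scoped ComplexOrder

open Matrix in
/-- Sufficiency direction of the S-Procedure: an LMI certificate implies the
robust quadratic inequality over the ball ‖x‖ ≤ ε. -/
theorem s_procedure_sufficiency (n : ℕ)
    (A : Matrix (Fin n) (Fin n) ℂ) (hA : A.IsHermitian)
    (b : Fin n → ℂ) (c ε : ℝ) (hε : 0 < ε)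
    (hcert : ∃ δ : ℝ, 0 ≤ δ ∧
      (Matrix.fromBlocks (A + (δ : ℂ) • 1)
        (Matrix.replicateCol Unit b) (Matrix.replicateRow Unit (star b))
        (((c - δ * ε^2 : ℝ) : ℂ) • 1)).PosSemidef) :
    ∀ x : Fin n → ℂ, ∑ i, Complex.normSq (x i) ≤ ε^2 →
      (star x ⬝ᵥ (A *ᵥ x)).re + 2 * (star x ⬝ᵥ b).re + c ≥ 0 := by
  obtain ⟨δ, hδ, hpsd⟩ := hcert
  intro x hx
  have h := (Matrix.posSemidef_iff_dotProduct_mulVec.mp hpsd).2 (Sum.elim x (fun _ => 1))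
  have hstar : star (Sum.elim x (fun _ : Unit => (1:ℂ))) =
      Sum.elim (star x) (fun _ => 1) := by
    funext i; cases i <;> simp
  rw [Matrix.fromBlocks_mulVec, hstar, sumElim_dotProduct_sumElim] at h
  replace h := h.trans_eq (show _ =
      star x ⬝ᵥ (A *ᵥ x) + (δ:ℂ) * (∑ i, (Complex.normSq (x i) : ℂ))
        + star x ⬝ᵥ b + starRingEnd ℂ (star x ⬝ᵥ b) + ((c:ℂ) - δ*ε^2) from by
    simp [dotProduct, Matrix.mulVec, Matrix.replicateCol, Matrix.replicateRow,
      Finset.mul_sum, Finset.sum_add_distrib, mul_add, add_mul, map_sum,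
      Complex.normSq_eq_conj_mul_self, mul_comm, mul_left_comm, Matrix.add_mulVec,
      Matrix.smul_mulVec, Complex.ofReal_sub, Complex.ofReal_mul, Complex.ofReal_pow]
    ring_nf
    simp only [mul_comm (x _) (δ:ℂ)]
    ring)
  rw [Complex.le_def] at h
  have hre := h.1
  simp only [Complex.add_re, Complex.sub_re, Complex.mul_re, Complex.ofReal_re,
    Complex.ofReal_im, Complex.zero_re, Complex.conj_re, Complex.ofReal_mul,
    ← Complex.ofReal_pow] at hre
  have hsum : (∑ i, (Complex.normSq (x i) : ℂ)).re = ∑ i, Complex.normSq (x i) := by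
    simp
  have hsumim : (∑ i, (Complex.normSq (x i) : ℂ)).im = 0 := by
    simp
  rw [hsum, hsumim] at hre
  nlinarith [mul_le_mul_of_nonneg_left hx hδ]
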